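/- Let θ be a random vector in ℝ^d whose d coordinates are i.i.d. exponential random variables with rate η = T^{−2/3} (density η e^{−ηs} for s ≥ 0). For each n = 1, …, T let (X_n(θ), Y_n(θ)) be a measurable selection of global minimax points over 𝒳 × 𝒴 of (x, y) ↦ Σ_{m<n} L̄_m(x, y) − θ^⊤x, and assume |L̄_n(x, y)| ≤ B_L for all n ≤ T and (x, y) ∈ 𝒳 × 𝒴. Then there exists a constant C > 0, depending only on d, B_L and x_max = max_{x∈𝒳}‖x‖₁ (but not on t or T), such that for every t ≤ T, Σ_{n<t} E‖X_n(θ) − X_{n+1}(θ)‖₁ ≤ C · t · T^{−1/3}. -/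

import Mathlib

open Finset MeasureTheory ProbabilityTheory
open scoped ENNReal


lemma aux_exp_shift {η δ : ℝ} (hη : 0 < η) (hδ : 0 ≤ δ)
    {G : ℝ → ℝ≥0∞} (hG : Measurable G) :
    ∫⁻ s, G (s + δ) ∂(expMeasure η)
      ≤ ENNReal.ofReal (Real.exp (η * δ)) * ∫⁻ s, G s ∂(expMeasure η) := by
  have hpdf : Measurable (exponentialPDF η) := (measurable_exponentialPDFReal η).ennreal_ofReal
  have hexp : expMeasure η = volume.withDensity (exponentialPDF η) := rfl
  have hGs : Measurable fun s : ℝ => G (s + δ) := hG.comp (measurable_add_const δ)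
  rw [hexp, lintegral_withDensity_eq_lintegral_mul _ hpdf hGs,
    lintegral_withDensity_eq_lintegral_mul _ hpdf hG]
  have key : (fun s => (exponentialPDF η * fun s => G (s + δ)) s)
      = fun s => (fun u => exponentialPDF η (u - δ) * G u) (s + δ) := by
    funext s; simp [add_sub_cancel_right]
  calc ∫⁻ s, (exponentialPDF η * fun s => G (s + δ)) s
      = ∫⁻ u, exponentialPDF η (u - δ) * G u := by
        rw [key]
        exact lintegral_add_right_eq_self (μ := volume)
          (fun u => exponentialPDF η (u - δ) * G u) δ
    _ ≤ ∫⁻ u, ENNReal.ofReal (Real.exp (η * δ)) * ((exponentialPDF η * G) u) := by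
        refine lintegral_mono fun u => ?_
        rcases lt_or_ge u δ with h | h
        · rw [exponentialPDF_of_neg (by linarith)]; simp
        · have hu : (0:ℝ) ≤ u := le_trans hδ h
          rw [Pi.mul_apply, exponentialPDF_of_nonneg (by linarith), exponentialPDF_of_nonneg hu,
            ← mul_assoc, ← ENNReal.ofReal_mul (Real.exp_nonneg _)]
          refine mul_le_mul_left (ENNReal.ofReal_le_ofReal (le_of_eq ?_)) _
          rw [show -(η * (u - δ)) = η * δ + -(η * u) by ring, Real.exp_add]; ring
    _ = ENNReal.ofReal (Real.exp (η * δ)) * ∫⁻ u, (exponentialPDF η * G) u :=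
        lintegral_const_mul _ (hpdf.mul hG)

lemma aux_pi_shift {d : ℕ} {η δ : ℝ} (hη : 0 < η) (hδ : 0 ≤ δ) (j : Fin d)
    {F : (Fin d → ℝ) → ℝ≥0∞} (hF : Measurable F) :
    ∫⁻ θv, F (Function.update θv j (θv j + δ)) ∂(Measure.pi fun _ : Fin d => expMeasure η)
      ≤ ENNReal.ofReal (Real.exp (η * δ))
          * ∫⁻ θv, F θv ∂(Measure.pi fun _ : Fin d => expMeasure η) := by
  haveI := isProbabilityMeasure_expMeasure hη
  have hS : Measurable fun θv : Fin d → ℝ => Function.update θv j (θv j + δ) := by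
    refine measurable_pi_iff.mpr fun k => ?_
    by_cases h : k = j
    · subst h
      simp only [Function.update_self]
      exact ((measurable_pi_apply k : Measurable fun θv : Fin d → ℝ => θv k)).add_const δ
    · simp only [Function.update_of_ne h]
      exact measurable_pi_apply k
  rw [← lintegral_const_mul _ hF]
  refine lintegral_le_of_lmarginal_le {j} (hF.comp hS)
    (measurable_const.mul hF) ?_
  refine Pi.le_def.mpr fun x => ?_
  rw [lmarginal_singleton, lmarginal_singleton]
  have h1 : ∀ s : ℝ,
      Function.update (Function.update x j s) j (Function.update x j s j + δ)
        = Function.update x j (s + δ) := by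
    intro s; rw [Function.update_self, Function.update_idem]
  simp only [h1]
  calc ∫⁻ s, F (Function.update x j (s + δ)) ∂(expMeasure η)
      ≤ ENNReal.ofReal (Real.exp (η * δ))
          * ∫⁻ s, F (Function.update x j s) ∂(expMeasure η) :=
        aux_exp_shift hη hδ (hF.comp (measurable_update x))
    _ = ∫⁻ s, ENNReal.ofReal (Real.exp (η * δ)) * F (Function.update x j s) ∂(expMeasure η) :=
        (lintegral_const_mul _ (hF.comp (measurable_update x))).symm

lemma aux_map_eq_pi {d : ℕ} {Ω : Type} [MeasureSpace Ω] [IsProbabilityMeasure (ℙ : Measure Ω)]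
    {θ : Ω → Fin d → ℝ} (hθ : Measurable θ) {η : ℝ} (hη : 0 < η)
    (hindep : iIndepFun (m := fun _ : Fin d => Real.measurableSpace) (fun k ω => θ ω k) ℙ)
    (hmap : ∀ k : Fin d, Measure.map (fun ω => θ ω k) ℙ = expMeasure η) :
    Measure.map θ ℙ = Measure.pi (fun _ : Fin d => expMeasure η) := by
  haveI := isProbabilityMeasure_expMeasure hη
  refine (Measure.pi_eq fun s hs => ?_).symm
  rw [Measure.map_apply hθ (MeasurableSet.univ_pi hs)]
  have hpre : θ ⁻¹' Set.pi Set.univ s = ⋂ k, (fun ω => θ ω k) ⁻¹' s k := by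
    ext ω; simp [Set.mem_univ_pi]
  rw [hpre, hindep.meas_iInter fun k => ⟨s k, hs k, rfl⟩]
  refine Finset.prod_congr rfl fun k _ => ?_
  rw [← hmap k, Measure.map_apply
    (show Measurable fun ω => θ ω k from (measurable_pi_apply k).comp hθ) (hs k)]


/-- Lemma 6, stability of the primal FTPL iterates: with i.i.d.
exponential (rate `η = T^{−2/3}`) perturbation coordinates and measurable selections of
global minimax points of the perturbed offline oracles, there is a constant `C > 0`
depending only on `d`, `B_L` and `x_max = max_{x∈𝒳}‖x‖₁` (not on `t` or `T`) with
`Σ_{n<t} E‖Xₙ(θ) − X_{n+1}(θ)‖₁ ≤ C · t · T^{−1/3}` for every `t ≤ T`. -/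
theorem stmt_18
    (d : ℕ) (hd : 0 < d) (BL xmax : ℝ) (hBL : 0 < BL) :
    ∃ C > 0, ∀ (I T : ℕ), 0 < I → 0 < T →
      ∀ 𝒳 : Set (Fin d → ℝ), 𝒳.Nonempty → IsCompact 𝒳 →
      IsGreatest ((fun x => ∑ j, |x j|) '' 𝒳) xmax →
      ∀ ymax : ℝ, 0 < ymax →
      ∀ 𝒴 : Set (Fin I → ℝ), 𝒴 = {y | ∀ i, y i ∈ Set.Icc (0 : ℝ) ymax} →
      ∀ G0 : ℝ, 0 < G0 →
      ∀ (f : ℕ → (Fin d → ℝ) → ℝ) (c : Fin I → ℕ → (Fin d → ℝ) → ℝ) (b : Fin I → ℝ),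
      (∀ i, 0 ≤ b i) →
      (∀ n, 1 ≤ n → n ≤ T → ∀ x x' : Fin d → ℝ,
        |f n x - f n x'| ≤ G0 * ∑ j, |x j - x' j|) →
      (∀ i n, 1 ≤ n → n ≤ T → ∀ x x' : Fin d → ℝ,
        |c i n x - c i n x'| ≤ G0 * ∑ j, |x j - x' j|) →
      ∀ lam : ℝ, 0 < lam →
      ∀ (L Lbar : ℕ → (Fin d → ℝ) → (Fin I → ℝ) → ℝ),
      (∀ n x y, L n x y = f n x + ∑ i, y i * (c i n x - b i)) →
      (∀ n x y, Lbar n x y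
        = L n x y + (lam / (n : ℝ) ^ ((1 : ℝ) / 9)) * ∑ i, Real.log (y i + 1)) →
      (∀ n, 1 ≤ n → n ≤ T → ∀ x ∈ 𝒳, ∀ y ∈ 𝒴, |Lbar n x y| ≤ BL) →
      ∀ (Ω : Type) (_ : MeasureSpace Ω) (_ : IsProbabilityMeasure (ℙ : Measure Ω))
        (θ : Ω → Fin d → ℝ), Measurable θ →
      -- the `d` coordinates of `θ` are i.i.d. exponential with rate `η = T^{−2/3}`
      iIndepFun (m := fun _ : Fin d => Real.measurableSpace) (fun k ω => θ ω k) ℙ →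
      (∀ k : Fin d, Measure.map (fun ω => θ ω k) ℙ
        = expMeasure ((T : ℝ) ^ (-(2 : ℝ) / 3))) →
      ∀ (X : ℕ → (Fin d → ℝ) → Fin d → ℝ) (Y : ℕ → (Fin d → ℝ) → Fin I → ℝ),
      (∀ n, Measurable (X n)) → (∀ n, Measurable (Y n)) →
      -- `(Xₙ(θ), Yₙ(θ))` is a global minimax point of `(x,y) ↦ Σ_{m<n} L̄ₘ(x,y) − θᵀx`
      (∀ n, 1 ≤ n → n ≤ T → ∀ θv : Fin d → ℝ,
        X n θv ∈ 𝒳 ∧ Y n θv ∈ 𝒴 ∧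
        (∀ y ∈ 𝒴,
          (∑ m ∈ Finset.Ico 1 n, Lbar m (X n θv) y) - ∑ j, θv j * X n θv j
            ≤ (∑ m ∈ Finset.Ico 1 n, Lbar m (X n θv) (Y n θv)) - ∑ j, θv j * X n θv j) ∧
        (∀ x ∈ 𝒳,
          (∑ m ∈ Finset.Ico 1 n, Lbar m (X n θv) (Y n θv)) - ∑ j, θv j * X n θv j
            ≤ sSup ((fun y' => (∑ m ∈ Finset.Ico 1 n, Lbar m x y') - ∑ j, θv j * x j) '' 𝒴))) →
      ∀ t, t ≤ T →
        ∑ n ∈ Finset.Ico 1 t, ∫ ω, ∑ j, |X n (θ ω) j - X (n + 1) (θ ω) j| ∂ℙ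
          ≤ C * t * (T : ℝ) ^ (-(1 : ℝ) / 3) := by
  refine ⟨8 * d * (max xmax 0) + 2 * d * BL, ?_, ?_⟩
  · have h1 : (0:ℝ) < 2 * d * BL := by positivity
    have h2 : (0:ℝ) ≤ 8 * d * (max xmax 0) := by positivity
    linarith
  intro I T hI hT 𝒳 h𝒳ne h𝒳cpt hxmax ymax hymax 𝒴 h𝒴 G0 hG0 f c b hb hfL hcL lam hlam
    L Lbar hL hLbar hLbnd Ω _mΩ _hprob θ hθ hindep hmap X Y hX hY hmm t htT
  set xm : ℝ := max xmax 0 with hxm_def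
  set η : ℝ := (T : ℝ) ^ (-(2 : ℝ) / 3) with hη_def
  set δ : ℝ := (T : ℝ) ^ ((1 : ℝ) / 3) with hδ_def
  set τ : ℝ := (T : ℝ) ^ (-(1 : ℝ) / 3) with hτ_def
  have hTpos : (0:ℝ) < T := by exact_mod_cast hT
  have hT1 : (1:ℝ) ≤ T := by exact_mod_cast hT
  have hηpos : 0 < η := Real.rpow_pos_of_pos hTpos _
  have hδpos : 0 < δ := Real.rpow_pos_of_pos hTpos _
  have hτ0 : 0 ≤ τ := (Real.rpow_pos_of_pos hTpos _).le
  have hηδ : η * δ = τ := by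
    rw [hη_def, hδ_def, hτ_def, ← Real.rpow_add hTpos]
    norm_num
  have hτ1 : τ ≤ 1 := by
    rw [hτ_def]
    exact Real.rpow_le_one_of_one_le_of_nonpos hT1 (by norm_num)
  have hηδ0 : 0 ≤ η * δ := by positivity
  have hexp1 : Real.exp (η * δ) - 1 ≤ 2 * τ := by
    have h := Real.abs_exp_sub_one_le (x := η * δ) (by rw [abs_of_nonneg hηδ0, hηδ]; exact hτ1)
    calc Real.exp (η * δ) - 1 ≤ |Real.exp (η * δ) - 1| := le_abs_self _
      _ ≤ 2 * |η * δ| := h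
      _ = 2 * τ := by rw [abs_of_nonneg hηδ0, hηδ]
  have hexp0 : 0 ≤ Real.exp (η * δ) - 1 := by
    have := Real.add_one_le_exp (η * δ); linarith
  have hinv : τ = δ⁻¹ := by
    rw [hτ_def, hδ_def, show (-(1:ℝ)/3) = -((1:ℝ)/3) by norm_num,
      Real.rpow_neg hTpos.le]
  -- the law of θ is the product of exponentials
  have hπ : Measure.map θ ℙ = Measure.pi (fun _ : Fin d => expMeasure η) :=
    aux_map_eq_pi hθ hηpos hindep hmap
  haveI hPexp : IsProbabilityMeasure (expMeasure η) := isProbabilityMeasure_expMeasure hηpos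
  -- basic set facts
  have h𝒴0 : (fun _ => 0 : Fin I → ℝ) ∈ 𝒴 := by
    rw [h𝒴]; intro i; exact ⟨le_rfl, hymax.le⟩
  have h𝒴ne : 𝒴.Nonempty := ⟨_, h𝒴0⟩
  have hxm0 : 0 ≤ xm := le_max_right _ _
  have hcoord : ∀ m, 1 ≤ m → m ≤ T → ∀ (θv : Fin d → ℝ) (j : Fin d), |X m θv j| ≤ xm := by
    intro m h1 h2 θv j
    have hmem := (hmm m h1 h2 θv).1
    have h3 : (∑ k, |X m θv k|) ≤ xmax := hxmax.2 ⟨X m θv, hmem, rfl⟩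
    have h4 : |X m θv j| ≤ ∑ k, |X m θv k| :=
      Finset.single_le_sum (f := fun k => |X m θv k|) (fun k _ => abs_nonneg _)
        (Finset.mem_univ j)
    calc |X m θv j| ≤ xmax := le_trans h4 h3
      _ ≤ xm := le_max_left _ _
  have hSabs : ∀ n, n ≤ T → ∀ x ∈ 𝒳, ∀ y ∈ 𝒴,
      |∑ m ∈ Finset.Ico 1 n, Lbar m x y| ≤ T * BL := by
    intro n hn x hx y hy
    calc |∑ m ∈ Finset.Ico 1 n, Lbar m x y| ≤ ∑ m ∈ Finset.Ico 1 n, |Lbar m x y| :=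
        Finset.abs_sum_le_sum_abs _ _
      _ ≤ ∑ m ∈ Finset.Ico 1 n, BL := by
          refine Finset.sum_le_sum fun m hm => ?_
          obtain ⟨h1m, h2m⟩ := Finset.mem_Ico.mp hm
          exact hLbnd m h1m (by omega) x hx y hy
      _ = ((n - 1 : ℕ) : ℝ) * BL := by rw [Finset.sum_const, Nat.card_Ico, nsmul_eq_mul]
      _ ≤ T * BL := by
          have hc : ((n - 1 : ℕ) : ℝ) ≤ (T : ℝ) := by exact_mod_cast (by omega : n - 1 ≤ T)
          exact mul_le_mul_of_nonneg_right hc hBL.le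
  have hbddA : ∀ n, n ≤ T → ∀ x ∈ 𝒳,
      BddAbove ((fun y => ∑ m ∈ Finset.Ico 1 n, Lbar m x y) '' 𝒴) := by
    intro n hn x hx
    refine ⟨T * BL, ?_⟩
    rintro z ⟨y, hy, rfl⟩
    exact (abs_le.mp (hSabs n hn x hx y hy)).2
  set g : ℕ → (Fin d → ℝ) → ℝ :=
    fun n x => sSup ((fun y => ∑ m ∈ Finset.Ico 1 n, Lbar m x y) '' 𝒴) with hg_def
  have hle_g : ∀ n, n ≤ T → ∀ x ∈ 𝒳, ∀ y ∈ 𝒴,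
      (∑ m ∈ Finset.Ico 1 n, Lbar m x y) ≤ g n x := by
    intro n hn x hx y hy
    exact le_csSup (hbddA n hn x hx) ⟨y, hy, rfl⟩
  have hgmin : ∀ n, 1 ≤ n → n ≤ T → ∀ θv : Fin d → ℝ, ∀ x ∈ 𝒳,
      g n (X n θv) - (∑ k, θv k * X n θv k) ≤ g n x - ∑ k, θv k * x k := by
    intro n h1 h2 θv x hx
    obtain ⟨hXm, hYm, hi1, hi2⟩ := hmm n h1 h2 θv
    have hgX : g n (X n θv) = ∑ m ∈ Finset.Ico 1 n, Lbar m (X n θv) (Y n θv) := by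
      refine le_antisymm (csSup_le (h𝒴ne.image _) ?_) (hle_g n h2 _ hXm _ hYm)
      rintro z ⟨y, hy, rfl⟩
      have h5 := hi1 y hy
      dsimp only
      linarith
    rw [hgX]
    refine le_trans (hi2 x hx) (csSup_le (h𝒴ne.image _) ?_)
    rintro z ⟨y, hy, rfl⟩
    have h6 := hle_g n h2 x hx y hy
    dsimp only
    linarith
  have h_upd_sum : ∀ (θv : Fin d → ℝ) (j : Fin d) (x : Fin d → ℝ),
      (∑ k, Function.update θv j (θv j + δ) k * x k) = (∑ k, θv k * x k) + δ * x j := by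
    intro θv j x
    have hterm : ∀ k : Fin d, Function.update θv j (θv j + δ) k * x k
        = θv k * x k + (if k = j then δ * x j else 0) := by
      intro k
      rcases eq_or_ne k j with h | h
      · rw [h, Function.update_self, if_pos rfl]; ring
      · rw [Function.update_of_ne h, if_neg h]; ring
    rw [Finset.sum_congr rfl fun k _ => hterm k, Finset.sum_add_distrib,
      Finset.sum_ite_eq' Finset.univ j fun _ => δ * x j]
    simp
  -- the deterministic stability estimate
  have hdet : ∀ n, 1 ≤ n → n + 1 ≤ T → ∀ (θv : Fin d → ℝ) (j : Fin d),
      |X n θv j - X (n+1) θv j| + ((X n θv j + xm) + (X (n+1) θv j + xm))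
        ≤ ((X n (Function.update θv j (θv j + δ)) j + xm)
            + (X (n+1) (Function.update θv j (θv j + δ)) j + xm)) + 2 * BL / δ := by
    intro n h1 h2 θv j
    set θ' : Fin d → ℝ := Function.update θv j (θv j + δ) with hθ'_def
    obtain ⟨hp, -, -, -⟩ := hmm n h1 (by omega) θv
    obtain ⟨hq, -, -, -⟩ := hmm (n+1) (by omega) h2 θv
    obtain ⟨hp', -, -, -⟩ := hmm n h1 (by omega) θ'
    obtain ⟨hq', -, -, -⟩ := hmm (n+1) (by omega) h2 θ'
    have hdot : ∀ x : Fin d → ℝ,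
        (∑ k, θ' k * x k) = (∑ k, θv k * x k) + δ * x j := fun x => h_upd_sum θv j x
    have hclose : ∀ x, x ∈ 𝒳 → g (n+1) x ≤ g n x + BL ∧ g n x ≤ g (n+1) x + BL := by
      intro x hx
      have hsum : ∀ y : Fin I → ℝ, (∑ m ∈ Finset.Ico 1 (n+1), Lbar m x y)
          = (∑ m ∈ Finset.Ico 1 n, Lbar m x y) + Lbar n x y :=
        fun y => Finset.sum_Ico_succ_top h1 _
      constructor
      · refine csSup_le (h𝒴ne.image _) ?_
        rintro z ⟨y, hy, rfl⟩
        have h3 := hle_g n (by omega) x hx y hy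
        have h4 := abs_le.mp (hLbnd n h1 (by omega) x hx y hy)
        dsimp only
        rw [hsum y]
        linarith [h4.2]
      · refine csSup_le (h𝒴ne.image _) ?_
        rintro z ⟨y, hy, rfl⟩
        have h3 := hle_g (n+1) h2 x hx y hy
        have h4 := abs_le.mp (hLbnd n h1 (by omega) x hx y hy)
        dsimp only
        rw [hsum y] at h3
        linarith [h4.1]
    have A2 := hgmin n h1 (by omega) θv _ hp'
    have A3 := hgmin n h1 (by omega) θv _ hq'
    have B2 := hgmin (n+1) (by omega) h2 θv _ hq'
    have B3 := hgmin (n+1) (by omega) h2 θv _ hp'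
    have C1 := hgmin n h1 (by omega) θ' _ hp
    have C2 := hgmin n h1 (by omega) θ' _ hq
    have D1 := hgmin (n+1) (by omega) h2 θ' _ hq
    have D2 := hgmin (n+1) (by omega) h2 θ' _ hp
    simp only [hdot] at C1 C2 D1 D2
    have hmono1 : X n θv j ≤ X n θ' j := by
      have h5 : δ * X n θv j ≤ δ * X n θ' j := by linarith
      exact le_of_mul_le_mul_left h5 hδpos
    have hmono2 : X (n+1) θv j ≤ X (n+1) θ' j := by
      have h5 : δ * X (n+1) θv j ≤ δ * X (n+1) θ' j := by linarith
      exact le_of_mul_le_mul_left h5 hδpos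
    have happrox1 : X (n+1) θv j - X n θ' j ≤ 2 * BL / δ := by
      rw [le_div_iff₀ hδpos]
      have h5 := (hclose _ hq).2
      have h6 := (hclose _ hp').1
      linarith [B3, C2]
    have happrox2 : X n θv j - X (n+1) θ' j ≤ 2 * BL / δ := by
      rw [le_div_iff₀ hδpos]
      have h5 := (hclose _ hp).1
      have h6 := (hclose _ hq').2
      linarith [A3, D2]
    have h2BLδ : 0 ≤ 2 * BL / δ := by positivity
    rcases abs_cases (X n θv j - X (n+1) θv j) with ⟨h7, -⟩ | ⟨h7, -⟩ <;> rw [h7]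
    · linarith
    · linarith
  -- per-step bound
  have hstep : ∀ n, 1 ≤ n → n + 1 ≤ T →
      ∫ ω, (∑ j, |X n (θ ω) j - X (n+1) (θ ω) j|) ∂ℙ ≤ (8 * d * xm + 2 * d * BL) * τ := by
    intro n h1 h2
    haveI : IsProbabilityMeasure (Measure.pi fun _ : Fin d => expMeasure η) := by infer_instance
    set π : Measure (Fin d → ℝ) := Measure.pi (fun _ : Fin d => expMeasure η) with hπ_def
    have hXj : ∀ m (j : Fin d), Measurable fun θv : Fin d → ℝ => X m θv j :=
      fun m j => (measurable_pi_apply j).comp (hX m)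
    have hΦm : Measurable fun θv : Fin d → ℝ => ∑ j, |X n θv j - X (n+1) θv j| :=
      Finset.measurable_sum _ fun j _ => ((hXj n j).sub (hXj (n+1) j)).abs
    have e1 : ∫ ω, (∑ j, |X n (θ ω) j - X (n+1) (θ ω) j|) ∂ℙ
        = ∫ θv, (∑ j, |X n θv j - X (n+1) θv j|) ∂π := by
      rw [← hπ, integral_map hθ.aemeasurable hΦm.aestronglyMeasurable]
    have e2 : ∫ θv, (∑ j, |X n θv j - X (n+1) θv j|) ∂π
        = (∫⁻ θv, ENNReal.ofReal (∑ j, |X n θv j - X (n+1) θv j|) ∂π).toReal :=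
      integral_eq_lintegral_of_nonneg_ae
        (Filter.Eventually.of_forall fun θv => Finset.sum_nonneg fun j _ => abs_nonneg _)
        hΦm.aestronglyMeasurable
    have hupd : ∀ j : Fin d,
        Measurable fun θv : Fin d → ℝ => Function.update θv j (θv j + δ) := by
      intro j
      refine measurable_pi_iff.mpr fun k => ?_
      by_cases h : k = j
      · subst h
        simp only [Function.update_self]
        exact ((measurable_pi_apply k : Measurable fun θv : Fin d → ℝ => θv k)).add_const δ
      · simp only [Function.update_of_ne h]
        exact measurable_pi_apply k
    have hu : ∀ m (j : Fin d),
        Measurable fun θv : Fin d → ℝ => ENNReal.ofReal (X m θv j + xm) :=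
      fun m j => ((hXj m j).add_const xm).ennreal_ofReal
    have hA : ∀ m, 1 ≤ m → m ≤ T → ∀ j : Fin d,
        (∫⁻ θv, ENNReal.ofReal (X m θv j + xm) ∂π) ≤ ENNReal.ofReal (2 * xm) := by
      intro m hm1 hm2 j
      calc ∫⁻ θv, ENNReal.ofReal (X m θv j + xm) ∂π
          ≤ ∫⁻ _, ENNReal.ofReal (2 * xm) ∂π := by
            refine lintegral_mono fun θv => ENNReal.ofReal_le_ofReal ?_
            have h3 := abs_le.mp (hcoord m hm1 hm2 θv j)
            linarith [h3.2]
        _ = ENNReal.ofReal (2 * xm) := by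
            rw [lintegral_const, measure_univ, mul_one]
    have hEc : ENNReal.ofReal (Real.exp (η * δ)) ≤ 1 + ENNReal.ofReal (Real.exp (η * δ) - 1) := by
      calc ENNReal.ofReal (Real.exp (η * δ))
          = ENNReal.ofReal (1 + (Real.exp (η * δ) - 1)) := by ring_nf
        _ ≤ ENNReal.ofReal 1 + ENNReal.ofReal (Real.exp (η * δ) - 1) := ENNReal.ofReal_add_le
        _ = 1 + ENNReal.ofReal (Real.exp (η * δ) - 1) := by rw [ENNReal.ofReal_one]
    have hVA : ∀ m, 1 ≤ m → m ≤ T → ∀ j : Fin d,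
        (∫⁻ θv, ENNReal.ofReal (X m (Function.update θv j (θv j + δ)) j + xm) ∂π)
          ≤ (∫⁻ θv, ENNReal.ofReal (X m θv j + xm) ∂π)
              + ENNReal.ofReal ((Real.exp (η * δ) - 1) * (2 * xm)) := by
      intro m hm1 hm2 j
      calc (∫⁻ θv, ENNReal.ofReal (X m (Function.update θv j (θv j + δ)) j + xm) ∂π)
          ≤ ENNReal.ofReal (Real.exp (η * δ)) * ∫⁻ θv, ENNReal.ofReal (X m θv j + xm) ∂π := by
            rw [hπ_def]
            exact aux_pi_shift hηpos hδpos.le j (hu m j)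
        _ ≤ (1 + ENNReal.ofReal (Real.exp (η * δ) - 1))
              * ∫⁻ θv, ENNReal.ofReal (X m θv j + xm) ∂π := mul_le_mul_left hEc _
        _ = (∫⁻ θv, ENNReal.ofReal (X m θv j + xm) ∂π)
              + ENNReal.ofReal (Real.exp (η * δ) - 1)
                * ∫⁻ θv, ENNReal.ofReal (X m θv j + xm) ∂π := by ring
        _ ≤ (∫⁻ θv, ENNReal.ofReal (X m θv j + xm) ∂π)
              + ENNReal.ofReal (Real.exp (η * δ) - 1) * ENNReal.ofReal (2 * xm) :=
            add_le_add_right (mul_le_mul_right (hA m hm1 hm2 j) _) _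
        _ = (∫⁻ θv, ENNReal.ofReal (X m θv j + xm) ∂π)
              + ENNReal.ofReal ((Real.exp (η * δ) - 1) * (2 * xm)) := by
            rw [ENNReal.ofReal_mul hexp0]
    have hIj : ∀ j : Fin d,
        (∫⁻ θv, ENNReal.ofReal |X n θv j - X (n+1) θv j| ∂π)
          ≤ ENNReal.ofReal ((Real.exp (η * δ) - 1) * (2 * xm)
              + ((Real.exp (η * δ) - 1) * (2 * xm) + 2 * BL / δ)) := by
      intro j
      set A1 : ℝ≥0∞ := ∫⁻ θv, ENNReal.ofReal (X n θv j + xm) ∂π with hA1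
      set A2 : ℝ≥0∞ := ∫⁻ θv, ENNReal.ofReal (X (n+1) θv j + xm) ∂π with hA2
      have hD : A1 + A2 ≠ ⊤ := by
        have h3 := add_le_add (hA n h1 (by omega) j) (hA (n+1) (by omega) h2 j)
        exact ne_top_of_le_ne_top (ENNReal.add_ne_top.mpr ⟨ENNReal.ofReal_ne_top, ENNReal.ofReal_ne_top⟩) h3
      have hptw : ∀ θv : Fin d → ℝ,
          ENNReal.ofReal |X n θv j - X (n+1) θv j|
              + (ENNReal.ofReal (X n θv j + xm) + ENNReal.ofReal (X (n+1) θv j + xm))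
            ≤ (ENNReal.ofReal (X n (Function.update θv j (θv j + δ)) j + xm)
                + ENNReal.ofReal (X (n+1) (Function.update θv j (θv j + δ)) j + xm))
                + ENNReal.ofReal (2 * BL / δ) := by
        intro θv
        have hd1 := hdet n h1 h2 θv j
        have n1 : 0 ≤ X n θv j + xm := by
          have h3 := abs_le.mp (hcoord n h1 (by omega) θv j); linarith [h3.1]
        have n2 : 0 ≤ X (n+1) θv j + xm := by
          have h3 := abs_le.mp (hcoord (n+1) (by omega) h2 θv j); linarith [h3.1]
        have n3 : 0 ≤ X n (Function.update θv j (θv j + δ)) j + xm := by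
          have h3 := abs_le.mp (hcoord n h1 (by omega) (Function.update θv j (θv j + δ)) j)
          linarith [h3.1]
        have n4 : 0 ≤ X (n+1) (Function.update θv j (θv j + δ)) j + xm := by
          have h3 := abs_le.mp (hcoord (n+1) (by omega) h2 (Function.update θv j (θv j + δ)) j)
          linarith [h3.1]
        calc ENNReal.ofReal |X n θv j - X (n+1) θv j|
              + (ENNReal.ofReal (X n θv j + xm) + ENNReal.ofReal (X (n+1) θv j + xm))
            = ENNReal.ofReal (|X n θv j - X (n+1) θv j|
                + ((X n θv j + xm) + (X (n+1) θv j + xm))) := by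
              rw [ENNReal.ofReal_add (abs_nonneg _) (add_nonneg n1 n2),
                ENNReal.ofReal_add n1 n2]
          _ ≤ ENNReal.ofReal (((X n (Function.update θv j (θv j + δ)) j + xm)
                + (X (n+1) (Function.update θv j (θv j + δ)) j + xm)) + 2 * BL / δ) :=
              ENNReal.ofReal_le_ofReal hd1
          _ = (ENNReal.ofReal (X n (Function.update θv j (θv j + δ)) j + xm)
                + ENNReal.ofReal (X (n+1) (Function.update θv j (θv j + δ)) j + xm))
                + ENNReal.ofReal (2 * BL / δ) := by
              rw [ENNReal.ofReal_add (add_nonneg n3 n4) (by positivity),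
                ENNReal.ofReal_add n3 n4]
      have habs : Measurable fun θv : Fin d → ℝ =>
          ENNReal.ofReal |X n θv j - X (n+1) θv j| :=
        (((hXj n j).sub (hXj (n+1) j)).abs).ennreal_ofReal
      have hm1 : Measurable fun θv : Fin d → ℝ =>
          ENNReal.ofReal (X n (Function.update θv j (θv j + δ)) j + xm) :=
        (hu n j).comp (hupd j)
      have hm2 : Measurable fun θv : Fin d → ℝ =>
          ENNReal.ofReal (X (n+1) (Function.update θv j (θv j + δ)) j + xm) :=
        (hu (n+1) j).comp (hupd j)
      have hint : (∫⁻ θv, ENNReal.ofReal |X n θv j - X (n+1) θv j| ∂π) + (A1 + A2)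
          ≤ (ENNReal.ofReal ((Real.exp (η * δ) - 1) * (2 * xm))
              + (ENNReal.ofReal ((Real.exp (η * δ) - 1) * (2 * xm))
                + ENNReal.ofReal (2 * BL / δ))) + (A1 + A2) := by
        calc (∫⁻ θv, ENNReal.ofReal |X n θv j - X (n+1) θv j| ∂π) + (A1 + A2)
            = ∫⁻ θv, (ENNReal.ofReal |X n θv j - X (n+1) θv j|
                + (ENNReal.ofReal (X n θv j + xm)
                  + ENNReal.ofReal (X (n+1) θv j + xm))) ∂π := by
              rw [lintegral_add_left habs, lintegral_add_left (hu n j)]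
          _ ≤ ∫⁻ θv, ((ENNReal.ofReal (X n (Function.update θv j (θv j + δ)) j + xm)
                + ENNReal.ofReal (X (n+1) (Function.update θv j (θv j + δ)) j + xm))
                + ENNReal.ofReal (2 * BL / δ)) ∂π := lintegral_mono hptw
          _ = (∫⁻ θv, ENNReal.ofReal (X n (Function.update θv j (θv j + δ)) j + xm) ∂π)
                + ((∫⁻ θv, ENNReal.ofReal
                      (X (n+1) (Function.update θv j (θv j + δ)) j + xm) ∂π)
                  + ENNReal.ofReal (2 * BL / δ)) := by
              rw [lintegral_add_right _ measurable_const, lintegral_add_left hm1, lintegral_const,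
                measure_univ, mul_one, add_assoc]
          _ ≤ ((A1 + ENNReal.ofReal ((Real.exp (η * δ) - 1) * (2 * xm)))
                + ((A2 + ENNReal.ofReal ((Real.exp (η * δ) - 1) * (2 * xm)))
                  + ENNReal.ofReal (2 * BL / δ))) :=
              add_le_add (hVA n h1 (by omega) j)
                (add_le_add_left (hVA (n+1) (by omega) h2 j) _)
          _ = (ENNReal.ofReal ((Real.exp (η * δ) - 1) * (2 * xm))
                + (ENNReal.ofReal ((Real.exp (η * δ) - 1) * (2 * xm))
                  + ENNReal.ofReal (2 * BL / δ))) + (A1 + A2) := by ring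
      have hcancel := (ENNReal.add_le_add_iff_right hD).mp hint
      have he1m : 0 ≤ (Real.exp (η * δ) - 1) * (2 * xm) := mul_nonneg hexp0 (by positivity)
      calc (∫⁻ θv, ENNReal.ofReal |X n θv j - X (n+1) θv j| ∂π)
          ≤ ENNReal.ofReal ((Real.exp (η * δ) - 1) * (2 * xm))
              + (ENNReal.ofReal ((Real.exp (η * δ) - 1) * (2 * xm))
                + ENNReal.ofReal (2 * BL / δ)) := hcancel
        _ = ENNReal.ofReal ((Real.exp (η * δ) - 1) * (2 * xm)
              + ((Real.exp (η * δ) - 1) * (2 * xm) + 2 * BL / δ)) := by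
            rw [← ENNReal.ofReal_add he1m (by positivity),
              ← ENNReal.ofReal_add he1m (add_nonneg he1m (by positivity))]
    have htot : (∫⁻ θv, ENNReal.ofReal (∑ j, |X n θv j - X (n+1) θv j|) ∂π)
        ≤ ENNReal.ofReal ((d : ℝ) * ((Real.exp (η * δ) - 1) * (2 * xm)
            + ((Real.exp (η * δ) - 1) * (2 * xm) + 2 * BL / δ))) := by
      have hof : ∀ θv : Fin d → ℝ, ENNReal.ofReal (∑ j, |X n θv j - X (n+1) θv j|)
          = ∑ j, ENNReal.ofReal |X n θv j - X (n+1) θv j| := fun θv =>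
        ENNReal.ofReal_sum_of_nonneg fun j _ => abs_nonneg _
      have hsplit : (∫⁻ θv, ENNReal.ofReal (∑ j, |X n θv j - X (n+1) θv j|) ∂π)
          = ∑ j, ∫⁻ θv, ENNReal.ofReal |X n θv j - X (n+1) θv j| ∂π := by
        simp_rw [hof]
        exact lintegral_finset_sum _ fun j _ =>
          (((hXj n j).sub (hXj (n+1) j)).abs).ennreal_ofReal
      rw [hsplit]
      calc (∑ j, ∫⁻ θv, ENNReal.ofReal |X n θv j - X (n+1) θv j| ∂π)
          ≤ ∑ _j : Fin d, ENNReal.ofReal ((Real.exp (η * δ) - 1) * (2 * xm)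
              + ((Real.exp (η * δ) - 1) * (2 * xm) + 2 * BL / δ)) :=
            Finset.sum_le_sum fun j _ => hIj j
        _ = (d : ℝ≥0∞) * ENNReal.ofReal ((Real.exp (η * δ) - 1) * (2 * xm)
              + ((Real.exp (η * δ) - 1) * (2 * xm) + 2 * BL / δ)) := by
            rw [Finset.sum_const, Finset.card_univ, Fintype.card_fin, nsmul_eq_mul]
        _ = ENNReal.ofReal ((d : ℝ) * ((Real.exp (η * δ) - 1) * (2 * xm)
              + ((Real.exp (η * δ) - 1) * (2 * xm) + 2 * BL / δ))) := by
            rw [← ENNReal.ofReal_natCast d, ← ENNReal.ofReal_mul (by positivity)]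
    have he1m : 0 ≤ (Real.exp (η * δ) - 1) * (2 * xm) := mul_nonneg hexp0 (by positivity)
    have hK0 : 0 ≤ (d : ℝ) * ((Real.exp (η * δ) - 1) * (2 * xm)
        + ((Real.exp (η * δ) - 1) * (2 * xm) + 2 * BL / δ)) := by
      have h4 : (0:ℝ) ≤ 2 * BL / δ := by positivity
      have h5 : (0:ℝ) ≤ (d:ℝ) := Nat.cast_nonneg d
      nlinarith
    rw [e1, e2]
    calc (∫⁻ θv, ENNReal.ofReal (∑ j, |X n θv j - X (n+1) θv j|) ∂π).toReal
        ≤ (ENNReal.ofReal ((d : ℝ) * ((Real.exp (η * δ) - 1) * (2 * xm)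
            + ((Real.exp (η * δ) - 1) * (2 * xm) + 2 * BL / δ)))).toReal :=
          ENNReal.toReal_mono ENNReal.ofReal_ne_top htot
      _ = (d : ℝ) * ((Real.exp (η * δ) - 1) * (2 * xm)
            + ((Real.exp (η * δ) - 1) * (2 * xm) + 2 * BL / δ)) :=
          ENNReal.toReal_ofReal hK0
      _ ≤ (8 * d * xm + 2 * d * BL) * τ := by
          have t1 : (Real.exp (η * δ) - 1) * (2 * xm) ≤ (2 * τ) * (2 * xm) :=
            mul_le_mul_of_nonneg_right hexp1 (by positivity)
          have t2 : 2 * BL / δ = 2 * BL * τ := by rw [div_eq_mul_inv, hinv]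
          rw [t2]
          calc (d : ℝ) * ((Real.exp (η * δ) - 1) * (2 * xm)
                + ((Real.exp (η * δ) - 1) * (2 * xm) + 2 * BL * τ))
              ≤ (d : ℝ) * ((2 * τ) * (2 * xm) + ((2 * τ) * (2 * xm) + 2 * BL * τ)) :=
                mul_le_mul_of_nonneg_left (by linarith) (Nat.cast_nonneg d)
            _ = (8 * d * xm + 2 * d * BL) * τ := by ring
  -- sum up
  calc ∑ n ∈ Finset.Ico 1 t, ∫ ω, (∑ j, |X n (θ ω) j - X (n + 1) (θ ω) j|) ∂ℙ
      ≤ ∑ n ∈ Finset.Ico 1 t, (8 * d * xm + 2 * d * BL) * τ := by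
        refine Finset.sum_le_sum fun n hn => ?_
        obtain ⟨hn1, hn2⟩ := Finset.mem_Ico.mp hn
        exact hstep n hn1 (by omega)
    _ = ((t - 1 : ℕ) : ℝ) * ((8 * d * xm + 2 * d * BL) * τ) := by
        rw [Finset.sum_const, Nat.card_Ico, nsmul_eq_mul]
    _ ≤ (t : ℝ) * ((8 * d * xm + 2 * d * BL) * τ) := by
        have hc : ((t - 1 : ℕ) : ℝ) ≤ (t : ℝ) := by exact_mod_cast (by omega : t - 1 ≤ t)
        have hnn : (0:ℝ) ≤ (8 * d * xm + 2 * d * BL) * τ :=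
          mul_nonneg (add_nonneg
            (mul_nonneg (mul_nonneg (by norm_num) (Nat.cast_nonneg d)) hxm0)
            (mul_nonneg (mul_nonneg (by norm_num) (Nat.cast_nonneg d)) hBL.le)) hτ0
        exact mul_le_mul_of_nonneg_right hc hnn
    _ = (8 * d * xm + 2 * d * BL) * t * τ := by ring
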